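/- arXiv:2307.11245 — 5 statements merged into one kernel-verified Lean document; each statement's English description precedes it below -/
import Mathlib

section
/- For every (z,λ) ∈ ℂ² and every n ≥ 0, one has | G(z,λ) − 2^{-n} log⁺|f_λⁿ(z)| | ≤ (log⁺|λ| + log 2) / 2^{n−1}. -/
/-- `log⁺ t = log (max t 1)`. -/
noncomputable def logPlus (t : ℝ) : ℝ := Real.log (max t 1)

lemma logPlus_nonneg (t : ℝ) : 0 ≤ logPlus t :=
  Real.log_nonneg (le_max_right _ _)

lemma logPlus_mono {a b : ℝ} (h : a ≤ b) : logPlus a ≤ logPlus b :=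
  Real.log_le_log (lt_of_lt_of_le one_pos (le_max_right _ _)) (max_le_max h le_rfl)

lemma logPlus_sq (t : ℝ) (ht : 0 ≤ t) : logPlus (t ^ 2) = 2 * logPlus t := by
  have : max (t ^ 2) 1 = (max t 1) ^ 2 := by
    rcases le_total t 1 with h | h
    · rw [max_eq_right h, max_eq_right, one_pow]
      nlinarith
    · rw [max_eq_left h, max_eq_left]
      nlinarith
  rw [logPlus, this, Real.log_pow, logPlus]
  push_cast; ring

lemma logPlus_add_le {a b : ℝ} (ha : 0 ≤ a) (hb : 0 ≤ b) :
    logPlus (a + b) ≤ logPlus a + logPlus b + Real.log 2 := by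
  have hxa : (1:ℝ) ≤ max a 1 := le_max_right _ _
  have hxb : (1:ℝ) ≤ max b 1 := le_max_right _ _
  have h1 : max (a + b) 1 ≤ 2 * (max a 1 * max b 1) := by
    have h2 : a + b ≤ 2 * (max a 1 * max b 1) := by
      have := le_max_left a 1
      have := le_max_left b 1
      nlinarith
    have h3 : (1:ℝ) ≤ 2 * (max a 1 * max b 1) := by nlinarith
    exact max_le h2 h3
  calc logPlus (a + b) ≤ Real.log (2 * (max a 1 * max b 1)) :=
        Real.log_le_log (lt_of_lt_of_le one_pos (le_max_right _ _)) h1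
    _ = logPlus a + logPlus b + Real.log 2 := by
        rw [Real.log_mul (by norm_num) (by positivity), Real.log_mul (by positivity) (by positivity)]
        unfold logPlus; ring

lemma key (lam w : ℂ) :
    |logPlus ‖w ^ 2 + lam‖ - 2 * logPlus ‖w‖| ≤
      logPlus ‖lam‖ + Real.log 2 := by
  set A := ‖w‖ with hA
  set B := ‖lam‖ with hB
  have hA0 : 0 ≤ A := norm_nonneg w
  have hB0 : 0 ≤ B := norm_nonneg lam
  have habs : ‖w ^ 2 + lam‖ ≤ A ^ 2 + B := by
    calc ‖w ^ 2 + lam‖ ≤ ‖w ^ 2‖ + ‖lam‖ :=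
          norm_add_le _ _
      _ = A ^ 2 + B := by rw [norm_pow]
  have hlow : A ^ 2 - B ≤ ‖w ^ 2 + lam‖ := by
    have h := norm_sub_le (w ^ 2 + lam) lam
    simp only [add_sub_cancel_right] at h
    have : ‖w ^ 2‖ ≤ ‖w ^ 2 + lam‖ + ‖lam‖ := h
    rw [norm_pow] at this
    linarith
  rw [abs_le]
  constructor
  · -- lower bound
    rcases le_or_gt (A ^ 2) (2 * max B 1) with h | h
    · have h1 : logPlus (A ^ 2) ≤ Real.log 2 + logPlus B := by
        calc logPlus (A ^ 2) ≤ Real.log (2 * max B 1) := by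
              apply Real.log_le_log (lt_of_lt_of_le one_pos (le_max_right _ _))
              exact max_le h (by have := le_max_right B 1; linarith)
          _ = Real.log 2 + logPlus B := by
              rw [Real.log_mul (by norm_num) (by positivity)]; rfl
      rw [logPlus_sq A hA0] at h1
      have := logPlus_nonneg ‖w ^ 2 + lam‖
      linarith
    · have hBle : B ≤ A ^ 2 / 2 := by
        have := le_max_left B 1; linarith
      have h1lt : (1:ℝ) < A ^ 2 / 2 := by
        have := le_max_right B 1; linarith
      have hge : A ^ 2 / 2 ≤ ‖w ^ 2 + lam‖ := by linarith
      have hL : Real.log (A ^ 2 / 2) ≤ logPlus ‖w ^ 2 + lam‖ := by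
        apply Real.log_le_log (by linarith)
        exact le_trans hge (le_max_left _ _)
      have hlog : Real.log (A ^ 2 / 2) = logPlus (A ^ 2) - Real.log 2 := by
        rw [Real.log_div (by nlinarith) (by norm_num)]
        have : logPlus (A ^ 2) = Real.log (A ^ 2) := by
          rw [logPlus, max_eq_left (by nlinarith)]
        rw [this]
      rw [logPlus_sq A hA0] at hlog
      have := logPlus_nonneg B
      linarith
  · -- upper bound
    have h1 : logPlus ‖w ^ 2 + lam‖ ≤
        2 * logPlus A + (logPlus B + Real.log 2) := by
      calc logPlus ‖w ^ 2 + lam‖ ≤ logPlus (A ^ 2 + B) := logPlus_mono habs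
        _ ≤ logPlus (A ^ 2) + logPlus B + Real.log 2 := logPlus_add_le (by positivity) hB0
        _ = 2 * logPlus A + (logPlus B + Real.log 2) := by rw [logPlus_sq A hA0]; ring
    linarith

theorem stmt4 (G : ℂ × ℂ → ℝ)
    (hG : ∀ p : ℂ × ℂ, Filter.Tendsto
      (fun n : ℕ => (2 : ℝ)⁻¹ ^ n * logPlus ‖(fun z => z ^ 2 + p.2)^[n] p.1‖)
      Filter.atTop (nhds (G p)))
    (z lam : ℂ) (n : ℕ) :
    |G (z, lam) - (2 : ℝ)⁻¹ ^ n * logPlus ‖(fun w => w ^ 2 + lam)^[n] z‖| ≤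
      (logPlus ‖lam‖ + Real.log 2) / (2 : ℝ) ^ ((n : ℤ) - 1) := by
  set f : ℂ → ℂ := fun w => w ^ 2 + lam with hf
  set a : ℕ → ℝ := fun m => (2 : ℝ)⁻¹ ^ m * logPlus ‖f^[m] z‖ with ha
  set C : ℝ := logPlus ‖lam‖ + Real.log 2 with hCdef
  have hC0 : 0 ≤ C := add_nonneg (logPlus_nonneg _) (Real.log_nonneg (by norm_num))
  have hstep : ∀ m : ℕ, |a (m + 1) - a m| ≤ (2 : ℝ)⁻¹ ^ (m + 1) * C := by
    intro m
    have hit : f^[m + 1] z = f (f^[m] z) := Function.iterate_succ_apply' f m z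
    have : a (m + 1) - a m =
        (2 : ℝ)⁻¹ ^ (m + 1) *
          (logPlus ‖(f^[m] z) ^ 2 + lam‖ - 2 * logPlus ‖f^[m] z‖) := by
      rw [ha]
      simp only [hit]
      rw [hf]
      ring
    rw [this, abs_mul, abs_of_nonneg (by positivity)]
    exact mul_le_mul_of_nonneg_left (key lam (f^[m] z)) (by positivity)
  have hdist : ∀ k : ℕ, dist (a (n + k)) (a n) ≤ (2 : ℝ)⁻¹ ^ n * C := by
    intro k
    rw [dist_comm]
    calc dist (a n) (a (n + k)) = dist ((fun i => a (n + i)) 0) ((fun i => a (n + i)) k) := by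
          simp
      _ ≤ ∑ i ∈ Finset.range k, dist (a (n + i)) (a (n + i + 1)) :=
          dist_le_range_sum_dist (fun i => a (n + i)) k
      _ ≤ ∑ i ∈ Finset.range k, (2 : ℝ)⁻¹ ^ (n + i + 1) * C := by
          apply Finset.sum_le_sum
          intro i _
          rw [dist_comm, Real.dist_eq]
          exact hstep (n + i)
      _ = (2 : ℝ)⁻¹ ^ n * C * ∑ i ∈ Finset.range k, (2 : ℝ)⁻¹ ^ (i + 1) := by
          rw [Finset.mul_sum]
          apply Finset.sum_congr rfl
          intro i _
          rw [show n + i + 1 = n + (i + 1) by ring, pow_add]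
          ring
      _ ≤ (2 : ℝ)⁻¹ ^ n * C * 1 := by
          apply mul_le_mul_of_nonneg_left _ (by positivity)
          have : ∑ i ∈ Finset.range k, (2 : ℝ)⁻¹ ^ (i + 1) =
              (2 : ℝ)⁻¹ * ∑ i ∈ Finset.range k, (2 : ℝ)⁻¹ ^ i := by
            rw [Finset.mul_sum]
            exact Finset.sum_congr rfl fun i _ => by rw [pow_succ]; ring
          rw [this]
          have h2 : ∑ i ∈ Finset.range k, (2 : ℝ)⁻¹ ^ i ≤ 2 := by
            have := sum_geometric_two_le k
            simpa [one_div] using this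
          linarith
      _ = (2 : ℝ)⁻¹ ^ n * C := mul_one _
  have htend : Filter.Tendsto (fun k : ℕ => a (n + k)) Filter.atTop (nhds (G (z, lam))) := by
    have h0 := hG (z, lam)
    have h1 : Filter.Tendsto a Filter.atTop (nhds (G (z, lam))) := h0
    have h2 := h1.comp (Filter.tendsto_add_atTop_nat n)
    exact h2.congr (fun k => show a (k + n) = a (n + k) by rw [Nat.add_comm])
  have hdG : dist (G (z, lam)) (a n) ≤ (2 : ℝ)⁻¹ ^ n * C := by
    have : Filter.Tendsto (fun k : ℕ => dist (a (n + k)) (a n)) Filter.atTop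
        (nhds (dist (G (z, lam)) (a n))) :=
      (htend.dist tendsto_const_nhds)
    exact le_of_tendsto this (Filter.Eventually.of_forall hdist)
  rw [Real.dist_eq] at hdG
  have hpow : (2 : ℝ) ^ ((n : ℤ) - 1) = (2 : ℝ) ^ n / 2 := by
    rw [zpow_sub₀ (by norm_num : (2:ℝ) ≠ 0), zpow_natCast, zpow_one]
  calc |G (z, lam) - (2 : ℝ)⁻¹ ^ n * logPlus ‖f^[n] z‖| ≤ (2 : ℝ)⁻¹ ^ n * C := hdG
    _ ≤ C / (2 : ℝ) ^ ((n : ℤ) - 1) := by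
        rw [hpow, inv_pow, div_div_eq_mul_div, div_eq_mul_inv, mul_comm C]
        have h1 : (0:ℝ) < ((2:ℝ) ^ n)⁻¹ := by positivity
        nlinarith [mul_le_mul_of_nonneg_left hC0 h1.le]
end

section
/- There is a constant C > 0 with the following property: for every polynomial z ∈ ℂ[λ], writing z_n ∈ ℂ[λ] for the polynomial z_n(λ) := f_λⁿ(z(λ)), the limit ĥ := lim_{n→∞} 2^{-n} deg(z_n) exists in ℝ, and |deg(z_n) − 2ⁿ·ĥ| ≤ C·(deg(z) + 1) for all n ≥ 0. -/
/-- `z_n ∈ ℂ[λ]` with `z_n(λ) = f_λⁿ(z(λ))`, i.e. `z_0 = z` and `z_{n+1} = z_n² + λ`. -/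
noncomputable def iterPoly (z : Polynomial ℂ) : ℕ → Polynomial ℂ
  | 0 => z
  | n + 1 => iterPoly z n ^ 2 + Polynomial.X

open Polynomial in
lemma degStep (p : Polynomial ℂ) (hp : 1 ≤ p.natDegree) :
    (p ^ 2 + Polynomial.X).natDegree = 2 * p.natDegree := by
  rw [natDegree_add_eq_left_of_natDegree_lt, natDegree_pow]
  rw [natDegree_pow, natDegree_X]
  omega

open Polynomial in
lemma iter_deg_pos (z : Polynomial ℂ) (hz : 1 ≤ z.natDegree) (n : ℕ) :
    (iterPoly z n).natDegree = 2 ^ n * z.natDegree := by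
  induction n with
  | zero => simp [iterPoly]
  | succ n ih =>
    have h1 : 1 ≤ (iterPoly z n).natDegree := by
      rw [ih]; exact Nat.mul_pos (Nat.two_pow_pos n) hz
    rw [iterPoly, degStep _ h1, ih, pow_succ]
    ring

open Polynomial in
lemma iter_deg_const (z : Polynomial ℂ) (hz : z.natDegree = 0) (n : ℕ) :
    (iterPoly z (n + 1)).natDegree = 2 ^ n := by
  induction n with
  | zero =>
    show (z ^ 2 + X).natDegree = 1
    rw [natDegree_add_eq_right_of_natDegree_lt, natDegree_X]
    rw [natDegree_X, natDegree_pow, hz]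
    omega
  | succ n ih =>
    show ((iterPoly z (n + 1)) ^ 2 + X).natDegree = 2 ^ (n + 1)
    rw [degStep _ (by rw [ih]; exact Nat.one_le_two_pow), ih, pow_succ]
    ring

theorem stmt5 :
    ∃ C : ℝ, 0 < C ∧ ∀ z : Polynomial ℂ, ∃ h : ℝ,
      Filter.Tendsto (fun n : ℕ => ((iterPoly z n).natDegree : ℝ) / 2 ^ n)
        Filter.atTop (nhds h) ∧
      ∀ n : ℕ, |((iterPoly z n).natDegree : ℝ) - 2 ^ n * h| ≤ C * ((z.natDegree : ℝ) + 1) := by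
  refine ⟨1, one_pos, fun z => ?_⟩
  rcases Nat.eq_zero_or_pos z.natDegree with hz | hz
  · refine ⟨1 / 2, ?_, ?_⟩
    · apply Filter.Tendsto.congr' (f₁ := fun _ => (1 : ℝ) / 2)
      · filter_upwards [Filter.eventually_ge_atTop 1] with n hn
        match n, hn with
        | (m + 1), _ => ?_
        rw [iter_deg_const z hz m]
        have h2 : (2 : ℝ) ^ (m + 1) ≠ 0 := by positivity
        push_cast
        field_simp
        ring
      · exact tendsto_const_nhds
    · intro n
      rw [hz]
      match n with
      | 0 =>
        simp [iterPoly, hz]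
        norm_num
      | n + 1 =>
        rw [iter_deg_const z hz n]
        have : (2 : ℝ) ^ (n + 1) * (1 / 2) = 2 ^ n := by
          rw [pow_succ]; ring
        rw [this]
        push_cast
        rw [sub_self, abs_zero]
        norm_num
  · refine ⟨z.natDegree, ?_, ?_⟩
    · apply Filter.Tendsto.congr' (f₁ := fun _ => (z.natDegree : ℝ))
      · filter_upwards with n
        rw [iter_deg_pos z hz n]
        have : (2 : ℝ) ^ n ≠ 0 := by positivity
        push_cast
        field_simp
      · exact tendsto_const_nhds
    · intro n
      rw [iter_deg_pos z hz n]
      push_cast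
      rw [sub_self, abs_zero]
      positivity
end

section
/- Let P ∈ ℂ[λ,w] and let Q, R ∈ ℂ[λ,x] satisfy P(λ,w) = Q(λ, w² + λ) + w·R(λ, w² + λ) identically. Let Z = {(w,λ) ∈ ℂ² : P(λ,w) = 0}. Then the image f(Z) under f(w,λ) = (w² + λ, λ) equals {(z,λ) ∈ ℂ² : Q(λ,z)² = (z − λ)·R(λ,z)²}. -/
open MvPolynomial

/-- The map `f : ℂ² → ℂ²`, `(w, λ) ↦ (w² + λ, λ)`. -/
noncomputable def F (p : ℂ × ℂ) : ℂ × ℂ := (p.1 ^ 2 + p.2, p.2)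

/- Variables of `P, Q, R` are ordered as (λ, w) resp. (λ, x): index 0 is λ.
Points of ℂ² are `(w, λ)` (resp. `(z, λ)`), so the first coordinate is the
dynamical variable and the second the parameter. -/
theorem stmt9 (P Q R : MvPolynomial (Fin 2) ℂ)
    (hPQR : ∀ lam w : ℂ,
      eval ![lam, w] P = eval ![lam, w ^ 2 + lam] Q + w * eval ![lam, w ^ 2 + lam] R)
    (Z : Set (ℂ × ℂ)) (hZ : Z = {p | eval ![p.2, p.1] P = 0}) :
    F '' Z = {p : ℂ × ℂ |
      (eval ![p.2, p.1] Q) ^ 2 = (p.1 - p.2) * (eval ![p.2, p.1] R) ^ 2} := by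
  subst hZ
  ext ⟨z, lam⟩
  simp only [Set.mem_image, Set.mem_setOf_eq, F, Prod.mk.injEq, Prod.exists]
  constructor
  · rintro ⟨w, l, hP, h1, h2⟩
    dsimp at hP h1 h2
    subst h2
    subst h1
    rw [hPQR] at hP
    have hQ : eval ![l, w ^ 2 + l] Q = -(w * eval ![l, w ^ 2 + l] R) := by
      linear_combination hP
    rw [hQ]; ring
  · intro h
    obtain ⟨w, hw⟩ := IsAlgClosed.exists_pow_nat_eq (z - lam) (n := 2) (by norm_num)
    have hz : z = w ^ 2 + lam := by linear_combination -hw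
    subst hz
    have h2 : (eval ![lam, w ^ 2 + lam] Q - w * eval ![lam, w ^ 2 + lam] R) *
        (eval ![lam, w ^ 2 + lam] Q + w * eval ![lam, w ^ 2 + lam] R) = 0 := by
      linear_combination h
    rcases mul_eq_zero.mp h2 with h3 | h3
    · refine ⟨-w, lam, ?_, by ring, rfl⟩
      rw [hPQR]
      rw [show (-w) ^ 2 = w ^ 2 by ring]
      linear_combination h3
    · exact ⟨w, lam, by rw [hPQR]; linear_combination h3, rfl, rfl⟩
end

section
/- Let λ₀ ∈ ℂ, k ≥ 1, and let y and z be holomorphic functions on an open neighborhood U of λ₀ such that: f_λ^k(y(λ)) = y(λ) for all λ ∈ U; |(f_{λ₀}^k)'(y(λ₀))| > 1; z(λ₀) = y(λ₀); and for every λ ∈ U the orbit of z(λ) under f_λ is bounded, i.e. sup_n |f_λⁿ(z(λ))| < ∞. Then z(λ) = y(λ) for all λ in some neighborhood of λ₀. -/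
open Metric Finset Function

/-- escape step -/
lemma esc_step (lam w : ℂ) (h : ‖lam‖ + 2 ≤ ‖w‖) :
    ‖w‖ + 1 ≤ ‖w ^ 2 + lam‖ := by
  have h1 : ‖w ^ 2‖ ≤ ‖w ^ 2 + lam‖ + ‖lam‖ := by
    have := norm_add_le (w ^ 2 + lam) (-lam)
    simpa using this
  have h2 : ‖w ^ 2‖ = ‖w‖ ^ 2 := by rw [norm_pow]
  have h0 : (0:ℝ) ≤ ‖lam‖ := norm_nonneg _
  nlinarith [norm_nonneg w]

/-- bounded orbit implies uniform bound -/
lemma orbit_bound (lam zz : ℂ) (M : ℝ)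
    (hM : ∀ n : ℕ, ‖(fun w => w ^ 2 + lam)^[n] zz‖ ≤ M) :
    ∀ n : ℕ, ‖(fun w => w ^ 2 + lam)^[n] zz‖ ≤ ‖lam‖ + 2 := by
  by_contra hcon
  push_neg at hcon
  obtain ⟨n0, hn0⟩ := hcon
  have key : ∀ j : ℕ, ‖lam‖ + 2 + j ≤
      ‖(fun w => w ^ 2 + lam)^[n0 + j] zz‖ := by
    intro j
    induction j with
    | zero => simpa using hn0.le
    | succ j ih =>
      have h1 : ‖lam‖ + 2 ≤ ‖(fun w => w ^ 2 + lam)^[n0 + j] zz‖ := by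
        have : (0:ℝ) ≤ j := Nat.cast_nonneg j
        linarith
      have h2 := esc_step lam _ h1
      have h3 : (fun w => w ^ 2 + lam)^[n0 + (j+1)] zz
          = ((fun w => w ^ 2 + lam)^[n0 + j] zz) ^ 2 + lam := by
        rw [show n0 + (j+1) = (n0 + j) + 1 by ring, Function.iterate_succ_apply']
      rw [h3]
      push_cast
      linarith
  obtain ⟨j, hj⟩ := exists_nat_gt (M - (‖lam‖ + 2))
  have := (key j).trans (hM (n0 + j))
  linarith

/-- factorization of difference of iterates -/
lemma iter_sub (lam w v : ℂ) (n : ℕ) :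
    (fun w => w ^ 2 + lam)^[n] w - (fun w => w ^ 2 + lam)^[n] v
      = (w - v) * ∏ j ∈ Finset.range n,
          ((fun w => w ^ 2 + lam)^[j] w + (fun w => w ^ 2 + lam)^[j] v) := by
  induction n with
  | zero => simp
  | succ n ih =>
    rw [Finset.prod_range_succ, Function.iterate_succ_apply', Function.iterate_succ_apply']
    linear_combination ((fun w => w ^ 2 + lam)^[n] w + (fun w => w ^ 2 + lam)^[n] v) * ih

lemma iter_diffble (lam : ℂ) (n : ℕ) : Differentiable ℂ ((fun w : ℂ => w ^ 2 + lam)^[n]) := by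
  induction n with
  | zero => simpa using differentiable_id (𝕜 := ℂ) (E := ℂ)
  | succ n ih =>
    rw [Function.iterate_succ']
    exact ((differentiable_pow 2).add_const lam).comp ih

/-- derivative of the iterate -/
lemma deriv_iter (lam w : ℂ) (n : ℕ) :
    deriv ((fun w => w ^ 2 + lam)^[n]) w
      = ∏ j ∈ Finset.range n, (2 * (fun w => w ^ 2 + lam)^[j] w) := by
  induction n with
  | zero => simp
  | succ n ih =>
    rw [Finset.prod_range_succ, Function.iterate_succ']
    rw [deriv_comp w (((differentiable_pow 2).add_const lam).differentiableAt)
        ((iter_diffble lam n).differentiableAt)]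
    have hd : deriv (fun w : ℂ => w ^ 2 + lam) ((fun w => w ^ 2 + lam)^[n] w)
        = 2 * (fun w => w ^ 2 + lam)^[n] w := by
      have : deriv (fun w : ℂ => w ^ 2 + lam) = fun w => 2 * w := by
        funext x
        rw [deriv_add_const, deriv_pow_field]
        ring
      rw [this]
    rw [hd, ih]
    ring

noncomputable def Hf (k : ℕ) (lam w v : ℂ) : ℂ :=
  ∏ j ∈ Finset.range k, ((fun u => u ^ 2 + lam)^[j] w + (fun u => u ^ 2 + lam)^[j] v)

noncomputable def Pf (k : ℕ) (y z g : ℂ → ℂ) : ℕ → ℂ → ℂ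
  | 0 => g
  | n+1 => fun lam => Pf k y z g n lam * Hf k lam ((fun w => w ^ 2 + lam)^[n*k] (z lam)) (y lam)

lemma iter_param_diffble {U : Set ℂ} {a : ℂ → ℂ} (ha : DifferentiableOn ℂ a U) (j : ℕ) :
    DifferentiableOn ℂ (fun lam => (fun w => w ^ 2 + lam)^[j] (a lam)) U := by
  induction j with
  | zero => simpa using ha
  | succ j ih =>
    have : (fun lam => (fun w => w ^ 2 + lam)^[j+1] (a lam))
        = fun lam => ((fun w => w ^ 2 + lam)^[j] (a lam)) ^ 2 + lam := by
      funext lam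
      rw [Function.iterate_succ_apply']
    rw [this]
    exact (ih.pow 2).add differentiableOn_id

lemma Hf_param_diffble {U : Set ℂ} {a b : ℂ → ℂ} (ha : DifferentiableOn ℂ a U)
    (hb : DifferentiableOn ℂ b U) (k : ℕ) :
    DifferentiableOn ℂ (fun lam => Hf k lam (a lam) (b lam)) U := by
  induction k with
  | zero => simpa [Hf] using differentiableOn_const 1
  | succ k ih =>
    have : (fun lam => Hf (k+1) lam (a lam) (b lam))
        = fun lam => Hf k lam (a lam) (b lam) *
            ((fun u => u ^ 2 + lam)^[k] (a lam) + (fun u => u ^ 2 + lam)^[k] (b lam)) := by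
      funext lam
      rw [Hf, Finset.prod_range_succ]
      rfl
    rw [this]
    exact ih.mul ((iter_param_diffble ha k).add (iter_param_diffble hb k))

theorem stmt13 (lam₀ : ℂ) (k : ℕ) (hk : 1 ≤ k) (U : Set ℂ) (hU : IsOpen U) (hmem₀ : lam₀ ∈ U)
    (y z : ℂ → ℂ) (hy : DifferentiableOn ℂ y U) (hz : DifferentiableOn ℂ z U)
    (hper : ∀ lam ∈ U, (fun w => w ^ 2 + lam)^[k] (y lam) = y lam)
    (hrep : 1 < ‖deriv ((fun w => w ^ 2 + lam₀)^[k]) (y lam₀)‖)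
    (heq : z lam₀ = y lam₀)
    (hb : ∀ lam ∈ U, ∃ M : ℝ, ∀ n : ℕ,
      ‖(fun w => w ^ 2 + lam)^[n] (z lam)‖ ≤ M) :
    ∀ᶠ lam in nhds lam₀, z lam = y lam := by
  have hUn : U ∈ nhds lam₀ := hU.mem_nhds hmem₀
  have hzy : AnalyticAt ℂ (fun lam => z lam - y lam) lam₀ :=
    (hz.analyticAt hUn).sub (hy.analyticAt hUn)
  rcases eq_or_ne (analyticOrderAt (fun lam => z lam - y lam) lam₀) ⊤ with htop | hne
  · filter_upwards [analyticOrderAt_eq_top.mp htop] with lam hl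
    exact sub_eq_zero.mp hl
  exfalso
  obtain ⟨m, hm⟩ := WithTop.ne_top_iff_exists.mp hne
  obtain ⟨g, hg, hg0, hfac⟩ := hzy.analyticOrderAt_eq_natCast.mp hm.symm
  -- choose a radius R where everything holds
  have hev : ∀ᶠ x in nhds lam₀,
      (AnalyticAt ℂ g x ∧ z x - y x = (x - lam₀) ^ m • g x) ∧ x ∈ U :=
    ((hg.eventually_analyticAt.and hfac).and (hU.eventually_mem hmem₀))
  obtain ⟨R, hR, hball⟩ := Metric.eventually_nhds_iff_ball.mp hev
  set r : ℝ := R / 2 with hrdef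
  have hr : 0 < r := by positivity
  have hsub : closedBall lam₀ r ⊆ ball lam₀ R := closedBall_subset_ball (by simp [hrdef]; linarith)
  have hballU : ball lam₀ R ⊆ U := fun x hx => (hball x hx).2
  -- abbreviations
  set hh : ℕ → ℂ → ℂ := fun n lam => (fun w => w ^ 2 + lam)^[n * k] (z lam) with hhdef
  set P : ℕ → ℂ → ℂ := Pf k y z g with hPdef
  -- (F1) recursion for hh
  have F1 : ∀ (lam : ℂ) (n : ℕ), hh (n+1) lam = (fun w => w ^ 2 + lam)^[k] (hh n lam) := by
    intro lam n
    simp only [hhdef]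
    rw [show (n+1) * k = k + n * k by ring, Function.iterate_add_apply]
  -- (F2) difference recursion
  have F2 : ∀ lam ∈ U, ∀ n : ℕ,
      hh (n+1) lam - y lam = (hh n lam - y lam) * Hf k lam (hh n lam) (y lam) := by
    intro lam hl n
    have h1 := iter_sub lam (hh n lam) (y lam) k
    rw [hper lam hl] at h1
    rw [F1, h1]
    rfl
  -- (F3) value at lam₀
  have F3 : ∀ n : ℕ, hh n lam₀ = y lam₀ := by
    intro n
    induction n with
    | zero => simpa [hhdef] using heq
    | succ n ih => rw [F1, ih, hper lam₀ hmem₀]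
  -- (F4) the multiplier
  set μ : ℂ := Hf k lam₀ (y lam₀) (y lam₀) with hmu
  have hμ : 1 < ‖μ‖ := by
    have : μ = deriv ((fun w => w ^ 2 + lam₀)^[k]) (y lam₀) := by
      rw [deriv_iter, hmu, Hf]
      exact Finset.prod_congr rfl fun j _ => by ring
    rw [this]
    exact hrep
  -- (F5) value of P at lam₀
  have F5 : ∀ n : ℕ, P n lam₀ = g lam₀ * μ ^ n := by
    intro n
    induction n with
    | zero => simp [hPdef, Pf]
    | succ n ih =>
      have : P (n+1) lam₀ = P n lam₀ * Hf k lam₀ (hh n lam₀) (y lam₀) := rfl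
      rw [this, F3 n, ih, ← hmu]
      ring
  -- (F6) factorization on the ball
  have F6 : ∀ lam ∈ ball lam₀ R, ∀ n : ℕ,
      hh n lam - y lam = (lam - lam₀) ^ m * P n lam := by
    intro lam hl n
    induction n with
    | zero =>
      have h0 : hh 0 lam = z lam := by simp [hhdef]
      rw [h0]
      simpa [hPdef, Pf, smul_eq_mul] using (hball lam hl).1.2
    | succ n ih =>
      rw [F2 lam (hballU hl) n, ih]
      have : P (n+1) lam = P n lam * Hf k lam (hh n lam) (y lam) := rfl
      rw [this]
      ring
  -- (F7) differentiability of P on the ball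
  have F7 : ∀ n : ℕ, DifferentiableOn ℂ (P n) (ball lam₀ R) := by
    intro n
    induction n with
    | zero =>
      intro x hx
      exact ((hball x hx).1.1.differentiableAt).differentiableWithinAt
    | succ n ih =>
      have hdH : DifferentiableOn ℂ (fun lam => Hf k lam (hh n lam) (y lam)) (ball lam₀ R) := by
        have hzb : DifferentiableOn ℂ (fun lam => hh n lam) (ball lam₀ R) := by
          simpa [hhdef] using iter_param_diffble (hz.mono hballU) (n * k)
        exact Hf_param_diffble hzb (hy.mono hballU) k
      have : P (n+1) = fun lam => P n lam * Hf k lam (hh n lam) (y lam) := rfl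
      rw [this]
      exact ih.mul hdH
  -- (F8) bound for y on the closed ball
  obtain ⟨Cy, hCy⟩ := (isCompact_closedBall lam₀ r).exists_bound_of_continuousOn
    ((hy.continuousOn).mono (hsub.trans hballU))
  set C : ℝ := (‖lam₀‖ + r + 2 + Cy) / r ^ m with hCdef
  -- bound for P n on the sphere
  have hsphere : ∀ n : ℕ, ∀ lam ∈ sphere lam₀ r, ‖P n lam‖ ≤ C := by
    intro n lam hl
    have hlc : lam ∈ closedBall lam₀ r := sphere_subset_closedBall hl
    have hlb : lam ∈ ball lam₀ R := hsub hlc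
    have hlU : lam ∈ U := hballU hlb
    have hdist : ‖lam - lam₀‖ = r := by
      rw [← Complex.dist_eq]
      exact mem_sphere_iff_norm.mp hl ▸ by
        simpa [Complex.dist_eq] using mem_sphere_iff_norm.mp hl
    -- orbit bound
    obtain ⟨M, hM⟩ := hb lam hlU
    have hhn : ‖hh n lam‖ ≤ ‖lam₀‖ + r + 2 := by
      have h1 := orbit_bound lam (z lam) M hM (n * k)
      have h2 : ‖lam‖ ≤ ‖lam₀‖ + r := by
        have : ‖lam - lam₀‖ = r := hdist
        have h3 := norm_add_le (lam - lam₀) lam₀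
        simp only [sub_add_cancel] at h3
        linarith
      simp only [hhdef]
      linarith
    have hyb : ‖y lam‖ ≤ Cy := hCy lam hlc
    have hfac6 := F6 lam hlb n
    have habs : r ^ m * ‖P n lam‖ = ‖hh n lam - y lam‖ := by
      rw [hfac6, norm_mul, norm_pow, hdist]
    have hup : ‖hh n lam - y lam‖ ≤ ‖lam₀‖ + r + 2 + Cy := by
      have := norm_sub_le (hh n lam) (y lam)
      calc ‖hh n lam - y lam‖ ≤ ‖hh n lam‖ + ‖y lam‖ :=
        norm_sub_le _ _
      _ ≤ ‖lam₀‖ + r + 2 + Cy := by linarith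
    have hrm : (0:ℝ) < r ^ m := pow_pos hr m
    rw [hCdef]
    rw [le_div_iff₀ hrm]
    nlinarith [habs, hup]
  -- maximum modulus
  have hmax : ∀ n : ℕ, ‖P n lam₀‖ ≤ C := by
    intro n
    have hdc : DiffContOnCl ℂ (P n) (ball lam₀ r) := by
      apply DifferentiableOn.diffContOnCl
      exact (F7 n).mono ((closure_ball_subset_closedBall).trans hsub)
    apply Complex.norm_le_of_forall_mem_frontier_norm_le isBounded_ball hdc
    · intro x hx
      rw [frontier_ball lam₀ hr.ne'] at hx
      exact hsphere n x hx
    · exact subset_closure (mem_ball_self hr)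
  -- contradiction
  have hgpos : 0 < ‖g lam₀‖ := by
    simpa using hg0
  obtain ⟨n, hn⟩ := pow_unbounded_of_one_lt (C / ‖g lam₀‖) hμ
  have hPn : ‖P n lam₀‖ = ‖g lam₀‖ * ‖μ‖ ^ n := by
    rw [F5 n, norm_mul, norm_pow]
  have := hmax n
  rw [hPn] at this
  rw [div_lt_iff₀ hgpos] at hn
  nlinarith
end

section
/- Let U ⊆ ℂ be open and let z : U → ℂ be holomorphic such that for every λ ∈ U the orbit of z(λ) under f_λ is bounded, i.e. sup_n |f_λⁿ(z(λ))| < ∞. Then for every compact set K ⊆ U one has sup_{n ∈ ℕ} sup_{λ ∈ K} |f_λⁿ(z(λ))| < ∞. -/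
lemma escape_aux (lam v : ℂ) (hv : max 2 (‖lam‖) < ‖v‖) :
    ∀ k : ℕ, max 2 (‖lam‖) < ‖(fun w => w ^ 2 + lam)^[k] v‖ ∧
      (‖v‖ - 1) ^ k * ‖v‖ ≤
        ‖(fun w => w ^ 2 + lam)^[k] v‖ := by
  set R := max 2 (‖lam‖) with hR
  have h2 : (2:ℝ) ≤ R := le_max_left _ _
  have hl : ‖lam‖ ≤ R := le_max_right _ _
  intro k
  induction k with
  | zero =>
    constructor
    · simpa using hv
    · simp
  | succ k ih =>
    obtain ⟨ih1, ih2⟩ := ih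
    set u := (fun w => w ^ 2 + lam)^[k] v with hu
    have hone : (1:ℝ) ≤ (‖v‖ - 1) ^ k :=
      one_le_pow₀ (by linarith)
    have huv : ‖v‖ ≤ ‖u‖ := by
      nlinarith [norm_nonneg v]
    have hu2 : 2 < ‖u‖ := lt_of_le_of_lt h2 ih1
    have step : ‖u‖ * (‖u‖ - 1) ≤ ‖u ^ 2 + lam‖ := by
      have key : ‖u‖ ^ 2 ≤ ‖u ^ 2 + lam‖ + ‖lam‖ := by
        have h := norm_add_le (u ^ 2 + lam) (-lam)
        rw [add_neg_cancel_right, norm_neg, norm_pow] at h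
        exact h
      nlinarith [ih1, hl]
    have hit : (fun w => w ^ 2 + lam)^[k+1] v = u ^ 2 + lam := by
      rw [Function.iterate_succ_apply', ← hu]
    rw [hit]
    constructor
    · calc R < ‖u‖ := ih1
        _ ≤ ‖u‖ * (‖u‖ - 1) := by nlinarith
        _ ≤ _ := step
    · calc (‖v‖ - 1) ^ (k+1) * ‖v‖
          = ((‖v‖ - 1) ^ k * ‖v‖) * (‖v‖ - 1) := by ring
        _ ≤ ‖u‖ * (‖u‖ - 1) := by
            have h1 : (1:ℝ) < ‖v‖ - 1 := by linarith
            have := ih2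
            nlinarith [norm_nonneg u]
        _ ≤ _ := step

lemma pointwise_bound (lam w : ℂ)
    (hb : ∃ M : ℝ, ∀ n : ℕ, ‖(fun w => w ^ 2 + lam)^[n] w‖ ≤ M) :
    ∀ n : ℕ, ‖(fun w => w ^ 2 + lam)^[n] w‖ ≤ max 2 (‖lam‖) := by
  obtain ⟨M, hM⟩ := hb
  intro n
  by_contra h
  push_neg at h
  set v := (fun w => w ^ 2 + lam)^[n] w with hv
  have hesc := escape_aux lam v h
  have hv2 : 2 < ‖v‖ := lt_of_le_of_lt (le_max_left _ _) h
  obtain ⟨k, hk⟩ := pow_unbounded_of_one_lt (M / ‖v‖)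
    (by linarith : (1:ℝ) < ‖v‖ - 1)
  have := (hesc k).2
  have hiter : (fun w => w ^ 2 + lam)^[k] v = (fun w => w ^ 2 + lam)^[n + k] w := by
    rw [hv, ← Function.iterate_add_apply, Nat.add_comm]
  have hMk := hM (n + k)
  rw [← hiter] at hMk
  have hvpos : 0 < ‖v‖ := by linarith
  have : M / ‖v‖ * ‖v‖ < (‖v‖ - 1) ^ k * ‖v‖ := by
    exact mul_lt_mul_of_pos_right hk hvpos
  rw [div_mul_cancel₀ _ (ne_of_gt hvpos)] at this
  linarith

theorem stmt14 (U : Set ℂ) (hU : IsOpen U) (z : ℂ → ℂ) (hz : DifferentiableOn ℂ z U)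
    (hb : ∀ lam ∈ U, ∃ M : ℝ, ∀ n : ℕ,
      ‖(fun w => w ^ 2 + lam)^[n] (z lam)‖ ≤ M) :
    ∀ K : Set ℂ, K ⊆ U → IsCompact K →
      ∃ M : ℝ, ∀ n : ℕ, ∀ lam ∈ K,
        ‖(fun w => w ^ 2 + lam)^[n] (z lam)‖ ≤ M := by
  intro K hKU hK
  obtain ⟨C, hC⟩ := hK.isBounded.subset_closedBall 0
  refine ⟨max 2 C, fun n lam hlam => ?_⟩
  have h1 := pointwise_bound lam (z lam) (hb lam (hKU hlam)) n
  have h2 : ‖lam‖ ≤ C := by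
    simpa [Complex.dist_eq] using hC hlam
  exact le_trans h1 (max_le_max le_rfl h2)
end
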